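/- The graph K_3 ∨ 3K_2 (join of a triangle with three disjoint edges) is d_1-choosable. -/

import Mathlib

open SimpleGraph

/-! ### Auxiliary combinatorial lemmas -/

section Aux
open Finset
section
variable {A1 B1 A2 B2 A3 B3 L P : Finset ℕ}

def PairValid (A B : Finset ℕ) (c d : ℕ) : Prop := c ∈ A ∧ d ∈ B ∧ c ≠ d

lemma pick_basic {A B : Finset ℕ} (hA : 2 ≤ A.card) (hB : 2 ≤ B.card) :
    ∃ c d, PairValid A B c d := by
  have hA0 : 0 < A.card := by omega
  obtain ⟨c, hc⟩ := Finset.card_pos.mp hA0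
  have h1 : (B.erase c).Nonempty := by
    rw [← Finset.card_pos]
    have := Finset.pred_card_le_card_erase (s := B) (a := c); omega
  obtain ⟨d, hd⟩ := h1
  exact ⟨c, d, hc, (Finset.mem_erase.mp hd).2, fun h => (Finset.mem_erase.mp hd).1 h.symm⟩

lemma pick_with {A B : Finset ℕ} (hA : 2 ≤ A.card) (hB : 2 ≤ B.card) {x : ℕ}
    (hx : x ∈ A ∪ B) : ∃ c d w, PairValid A B c d ∧ ({c,d} : Finset ℕ) = {x,w} := by
  rcases Finset.mem_union.mp hx with h | h
  · have h1 : (B.erase x).Nonempty := by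
      rw [← Finset.card_pos]
      have := Finset.pred_card_le_card_erase (s := B) (a := x); omega
    obtain ⟨d, hd⟩ := h1
    exact ⟨x, d, d, ⟨h, (Finset.mem_erase.mp hd).2,
      fun h' => (Finset.mem_erase.mp hd).1 h'.symm⟩, rfl⟩
  · have h1 : (A.erase x).Nonempty := by
      rw [← Finset.card_pos]
      have := Finset.pred_card_le_card_erase (s := A) (a := x); omega
    obtain ⟨c, hc⟩ := h1
    exact ⟨c, x, c, ⟨(Finset.mem_erase.mp hc).2, h, (Finset.mem_erase.mp hc).1⟩,
      Finset.pair_comm c x⟩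

def Opt (A B : Finset ℕ) (x : ℕ) : Finset ℕ :=
  (if x ∈ A then B.erase x else ∅) ∪ (if x ∈ B then A.erase x else ∅)

lemma opt_card {A B : Finset ℕ} (hA : 3 ≤ A.card) (hB : 3 ≤ B.card) {x : ℕ}
    (hx : x ∈ A ∪ B) : 2 ≤ (Opt A B x).card := by
  rcases Finset.mem_union.mp hx with h | h
  · refine le_trans ?_ (Finset.card_le_card
      (Finset.subset_union_left (s₂ := (if x ∈ B then A.erase x else ∅))))
    rw [if_pos h]
    have := Finset.pred_card_le_card_erase (s := B) (a := x); omega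
  · refine le_trans ?_ (Finset.card_le_card
      (Finset.subset_union_right (s₁ := (if x ∈ A then B.erase x else ∅))))
    rw [if_pos h]
    have := Finset.pred_card_le_card_erase (s := A) (a := x); omega

lemma opt_subset (A B : Finset ℕ) (x : ℕ) : Opt A B x ⊆ (A ∪ B).erase x := by
  intro w hw
  rcases Finset.mem_union.mp hw with h | h
  · split_ifs at h with h'
    · rcases Finset.mem_erase.mp h with ⟨h1, h2⟩
      exact Finset.mem_erase.mpr ⟨h1, Finset.mem_union_right _ h2⟩
    · simp at h
  · split_ifs at h with h'
    · rcases Finset.mem_erase.mp h with ⟨h1, h2⟩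
      exact Finset.mem_erase.mpr ⟨h1, Finset.mem_union_left _ h2⟩
    · simp at h

lemma pick_opt {A B : Finset ℕ} {x w : ℕ} (hw : w ∈ Opt A B x) :
    ∃ c d, PairValid A B c d ∧ ({c,d} : Finset ℕ) = {x,w} := by
  rcases Finset.mem_union.mp hw with h | h
  · split_ifs at h with h'
    · exact ⟨x, w, ⟨h', (Finset.mem_erase.mp h).2,
        fun h'' => (Finset.mem_erase.mp h).1 h''.symm⟩, rfl⟩
    · simp at h
  · split_ifs at h with h'
    · exact ⟨w, x, ⟨(Finset.mem_erase.mp h).2, h', (Finset.mem_erase.mp h).1⟩,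
        Finset.pair_comm w x⟩
    · simp at h

lemma card2 (a b : ℕ) : ({a,b} : Finset ℕ).card ≤ 2 := by
  apply le_trans (Finset.card_insert_le _ _); simp

lemma card4 (a b c d : ℕ) : ({a,b,c,d} : Finset ℕ).card ≤ 4 := by
  refine le_trans (Finset.card_insert_le _ _) (Nat.add_le_add_right ?_ 1)
  refine le_trans (Finset.card_insert_le _ _) (Nat.add_le_add_right ?_ 1)
  exact card2 _ _

lemma card5 (a b c d e : ℕ) : ({a,b,c,d,e} : Finset ℕ).card ≤ 5 :=
  le_trans (Finset.card_insert_le _ _) (Nat.add_le_add_right (card4 _ _ _ _) 1)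

lemma card6 (a b c d e f : ℕ) : ({a,b,c,d,e,f} : Finset ℕ).card ≤ 6 :=
  le_trans (Finset.card_insert_le _ _) (Nat.add_le_add_right (card5 _ _ _ _ _) 1)

def Choice (A1 B1 A2 B2 A3 B3 P : Finset ℕ) (n : ℕ) : Prop :=
  ∃ c1 d1 c2 d2 c3 d3, PairValid A1 B1 c1 d1 ∧ PairValid A2 B2 c2 d2 ∧
    PairValid A3 B3 c3 d3 ∧ (({c1,d1,c2,d2,c3,d3} : Finset ℕ) ∩ P).card ≤ n

/-- kernel core: all six lists inside `L` of size 7, `x` common to the unions of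
pairs 1 and 2. -/
lemma KA_core (hL : L.card = 7)
    (a1 : A1.card = 3) (b1 : B1.card = 3) (a2 : A2.card = 3) (b2 : B2.card = 3)
    (a3 : A3.card = 3) (b3 : B3.card = 3)
    (s1 : A1 ∪ B1 ⊆ L) (s2 : A2 ∪ B2 ⊆ L) (s3 : A3 ∪ B3 ⊆ L)
    {x : ℕ} (hx1 : x ∈ A1 ∪ B1) (hx2 : x ∈ A2 ∪ B2) :
    Choice A1 B1 A2 B2 A3 B3 L 4 := by
  by_cases hx3 : x ∈ A3 ∪ B3
  · -- x usable in all three pairs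
    obtain ⟨c1, d1, w1, v1, e1⟩ := pick_with (by omega) (by omega) hx1
    obtain ⟨c2, d2, w2, v2, e2⟩ := pick_with (by omega) (by omega) hx2
    obtain ⟨c3, d3, w3, v3, e3⟩ := pick_with (by omega) (by omega) hx3
    refine ⟨c1, d1, c2, d2, c3, d3, v1, v2, v3, ?_⟩
    refine le_trans (Finset.card_le_card ?_) (card4 x w1 w2 w3)
    intro a ha
    have haf := (Finset.mem_inter.mp ha).1
    have E1 : (a = c1 ∨ a = d1) ↔ (a = x ∨ a = w1) := by
      simpa using Finset.ext_iff.mp e1 a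
    have E2 : (a = c2 ∨ a = d2) ↔ (a = x ∨ a = w2) := by
      simpa using Finset.ext_iff.mp e2 a
    have E3 : (a = c3 ∨ a = d3) ↔ (a = x ∨ a = w3) := by
      simpa using Finset.ext_iff.mp e3 a
    simp only [Finset.mem_insert, Finset.mem_singleton] at haf ⊢
    rcases haf with h|h|h|h|h|h
    · rcases E1.mp (Or.inl h) with h|h <;> omega
    · rcases E1.mp (Or.inr h) with h|h <;> omega
    · rcases E2.mp (Or.inl h) with h|h <;> omega
    · rcases E2.mp (Or.inr h) with h|h <;> omega
    · rcases E3.mp (Or.inl h) with h|h <;> omega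
    · rcases E3.mp (Or.inr h) with h|h <;> omega
  · by_cases h12 : (Opt A1 B1 x ∩ Opt A2 B2 x).Nonempty
    · obtain ⟨w, hw⟩ := h12
      obtain ⟨c1, d1, v1, e1⟩ := pick_opt (Finset.mem_inter.mp hw).1
      obtain ⟨c2, d2, v2, e2⟩ := pick_opt (Finset.mem_inter.mp hw).2
      obtain ⟨c3, d3, v3⟩ := pick_basic (A := A3) (B := B3) (by omega) (by omega)
      refine ⟨c1, d1, c2, d2, c3, d3, v1, v2, v3, ?_⟩
      refine le_trans (Finset.card_le_card ?_) (card4 x w c3 d3)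
      intro a ha
      have haf := (Finset.mem_inter.mp ha).1
      have E1 : (a = c1 ∨ a = d1) ↔ (a = x ∨ a = w) := by
        simpa using Finset.ext_iff.mp e1 a
      have E2 : (a = c2 ∨ a = d2) ↔ (a = x ∨ a = w) := by
        simpa using Finset.ext_iff.mp e2 a
      simp only [Finset.mem_insert, Finset.mem_singleton] at haf ⊢
      rcases haf with h|h|h|h|h|h
      · rcases E1.mp (Or.inl h) with h|h <;> omega
      · rcases E1.mp (Or.inr h) with h|h <;> omega
      · rcases E2.mp (Or.inl h) with h|h <;> omega
      · rcases E2.mp (Or.inr h) with h|h <;> omega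
      · omega
      · omega
    · by_cases h13 : (Opt A1 B1 x ∩ (A3 ∪ B3)).Nonempty
      · obtain ⟨z, hz⟩ := h13
        obtain ⟨c1, d1, v1, e1⟩ := pick_opt (Finset.mem_inter.mp hz).1
        obtain ⟨c2, d2, w2, v2, e2⟩ := pick_with (by omega) (by omega) hx2
        obtain ⟨c3, d3, w3, v3, e3⟩ :=
          pick_with (by omega) (by omega) (Finset.mem_inter.mp hz).2
        refine ⟨c1, d1, c2, d2, c3, d3, v1, v2, v3, ?_⟩
        refine le_trans (Finset.card_le_card ?_) (card4 x z w2 w3)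
        intro a ha
        have haf := (Finset.mem_inter.mp ha).1
        have E1 : (a = c1 ∨ a = d1) ↔ (a = x ∨ a = z) := by
          simpa using Finset.ext_iff.mp e1 a
        have E2 : (a = c2 ∨ a = d2) ↔ (a = x ∨ a = w2) := by
          simpa using Finset.ext_iff.mp e2 a
        have E3 : (a = c3 ∨ a = d3) ↔ (a = z ∨ a = w3) := by
          simpa using Finset.ext_iff.mp e3 a
        simp only [Finset.mem_insert, Finset.mem_singleton] at haf ⊢
        rcases haf with h|h|h|h|h|h
        · rcases E1.mp (Or.inl h) with h|h <;> omega
        · rcases E1.mp (Or.inr h) with h|h <;> omega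
        · rcases E2.mp (Or.inl h) with h|h <;> omega
        · rcases E2.mp (Or.inr h) with h|h <;> omega
        · rcases E3.mp (Or.inl h) with h|h <;> omega
        · rcases E3.mp (Or.inr h) with h|h <;> omega
      · by_cases h23 : (Opt A2 B2 x ∩ (A3 ∪ B3)).Nonempty
        · obtain ⟨z, hz⟩ := h23
          obtain ⟨c2, d2, v2, e2⟩ := pick_opt (Finset.mem_inter.mp hz).1
          obtain ⟨c1, d1, w1, v1, e1⟩ := pick_with (by omega) (by omega) hx1
          obtain ⟨c3, d3, w3, v3, e3⟩ :=
            pick_with (by omega) (by omega) (Finset.mem_inter.mp hz).2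
          refine ⟨c1, d1, c2, d2, c3, d3, v1, v2, v3, ?_⟩
          refine le_trans (Finset.card_le_card ?_) (card4 x z w1 w3)
          intro a ha
          have haf := (Finset.mem_inter.mp ha).1
          have E1 : (a = c1 ∨ a = d1) ↔ (a = x ∨ a = w1) := by
            simpa using Finset.ext_iff.mp e1 a
          have E2 : (a = c2 ∨ a = d2) ↔ (a = x ∨ a = z) := by
            simpa using Finset.ext_iff.mp e2 a
          have E3 : (a = c3 ∨ a = d3) ↔ (a = z ∨ a = w3) := by
            simpa using Finset.ext_iff.mp e3 a
          simp only [Finset.mem_insert, Finset.mem_singleton] at haf ⊢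
          rcases haf with h|h|h|h|h|h
          · rcases E1.mp (Or.inl h) with h|h <;> omega
          · rcases E1.mp (Or.inr h) with h|h <;> omega
          · rcases E2.mp (Or.inl h) with h|h <;> omega
          · rcases E2.mp (Or.inr h) with h|h <;> omega
          · rcases E3.mp (Or.inl h) with h|h <;> omega
          · rcases E3.mp (Or.inr h) with h|h <;> omega
        · -- contradiction by cardinalities
          exfalso
          rw [Finset.not_nonempty_iff_eq_empty] at h12 h13 h23
          have hxL : x ∈ L := s1 hx1
          have hO1 : Opt A1 B1 x ⊆ L.erase x :=
            le_trans (opt_subset _ _ _) (Finset.erase_subset_erase _ s1)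
          have hO2 : Opt A2 B2 x ⊆ L.erase x :=
            le_trans (opt_subset _ _ _) (Finset.erase_subset_erase _ s2)
          have hU3 : A3 ∪ B3 ⊆ L.erase x := by
            intro a ha
            exact Finset.mem_erase.mpr ⟨fun h => hx3 (h ▸ ha), s3 ha⟩
          have d12 : Disjoint (Opt A1 B1 x) (Opt A2 B2 x) :=
            Finset.disjoint_iff_inter_eq_empty.mpr h12
          have d13 : Disjoint (Opt A1 B1 x) (A3 ∪ B3) :=
            Finset.disjoint_iff_inter_eq_empty.mpr h13
          have d23 : Disjoint (Opt A2 B2 x) (A3 ∪ B3) :=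
            Finset.disjoint_iff_inter_eq_empty.mpr h23
          have hd : Disjoint (Opt A1 B1 x ∪ Opt A2 B2 x) (A3 ∪ B3) :=
            Finset.disjoint_union_left.mpr ⟨d13, d23⟩
          have hcard : (Opt A1 B1 x ∪ Opt A2 B2 x ∪ (A3 ∪ B3)).card =
              (Opt A1 B1 x).card + (Opt A2 B2 x).card + (A3 ∪ B3).card := by
            rw [Finset.card_union_of_disjoint hd, Finset.card_union_of_disjoint d12]
          have hsub : Opt A1 B1 x ∪ Opt A2 B2 x ∪ (A3 ∪ B3) ⊆ L.erase x :=
            Finset.union_subset (Finset.union_subset hO1 hO2) hU3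
          have hle := Finset.card_le_card hsub
          have he : (L.erase x).card = 6 := by
            rw [Finset.card_erase_of_mem hxL, hL]
          have hc1 : 2 ≤ (Opt A1 B1 x).card := opt_card (by omega) (by omega) hx1
          have hc2 : 2 ≤ (Opt A2 B2 x).card := opt_card (by omega) (by omega) hx2
          have hc3 : 3 ≤ (A3 ∪ B3).card :=
            le_trans (by omega) (Finset.card_le_card Finset.subset_union_left)
          omega
end

section
variable {A1 B1 A2 B2 A3 B3 L P : Finset ℕ}

lemma choice_swap12 {n : ℕ}
    (h : Choice A2 B2 A1 B1 A3 B3 P n) : Choice A1 B1 A2 B2 A3 B3 P n := by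
  obtain ⟨c2, d2, c1, d1, c3, d3, h2, h1, h3, hc⟩ := h
  refine ⟨c1, d1, c2, d2, c3, d3, h1, h2, h3, ?_⟩
  have e : ({c1,d1,c2,d2,c3,d3} : Finset ℕ) = {c2,d2,c1,d1,c3,d3} := by
    ext a; simp; tauto
  rw [e]; exact hc

lemma choice_swap23 {n : ℕ}
    (h : Choice A1 B1 A3 B3 A2 B2 P n) : Choice A1 B1 A2 B2 A3 B3 P n := by
  obtain ⟨c1, d1, c3, d3, c2, d2, h1, h3, h2, hc⟩ := h
  refine ⟨c1, d1, c2, d2, c3, d3, h1, h2, h3, ?_⟩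
  have e : ({c1,d1,c2,d2,c3,d3} : Finset ℕ) = {c1,d1,c3,d3,c2,d2} := by
    ext a; simp; tauto
  rw [e]; exact hc

lemma choice_swap13 {n : ℕ}
    (h : Choice A3 B3 A2 B2 A1 B1 P n) : Choice A1 B1 A2 B2 A3 B3 P n := by
  obtain ⟨c3, d3, c2, d2, c1, d1, h3, h2, h1, hc⟩ := h
  refine ⟨c1, d1, c2, d2, c3, d3, h1, h2, h3, ?_⟩
  have e : ({c1,d1,c2,d2,c3,d3} : Finset ℕ) = {c3,d3,c2,d2,c1,d1} := by
    ext a; simp; tauto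
  rw [e]; exact hc

lemma find_inter {U1 U2 U3 : Finset ℕ} (h1 : U1 ⊆ P) (h2 : U2 ⊆ P) (h3 : U3 ⊆ P)
    (c1 : 3 ≤ U1.card) (c2 : 3 ≤ U2.card) (c3 : 3 ≤ U3.card) (hP : P.card ≤ 8) :
    (U1 ∩ U2).Nonempty ∨ (U1 ∩ U3).Nonempty ∨ (U2 ∩ U3).Nonempty := by
  by_contra h
  push_neg at h
  obtain ⟨e12, e13, e23⟩ := h
  have d12 : Disjoint U1 U2 := Finset.disjoint_iff_inter_eq_empty.mpr e12
  have d13 : Disjoint U1 U3 := Finset.disjoint_iff_inter_eq_empty.mpr e13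
  have d23 : Disjoint U2 U3 := Finset.disjoint_iff_inter_eq_empty.mpr e23
  have hd : Disjoint (U1 ∪ U2) U3 := Finset.disjoint_union_left.mpr ⟨d13, d23⟩
  have hcard : (U1 ∪ U2 ∪ U3).card = U1.card + U2.card + U3.card := by
    rw [Finset.card_union_of_disjoint hd, Finset.card_union_of_disjoint d12]
  have := Finset.card_le_card (Finset.union_subset (Finset.union_subset h1 h2) h3)
  omega

/-- kernel, with one displaced pair (pair 3 has an element outside `L`). -/
lemma KB_core (hL : L.card = 7)
    (a1 : A1.card = 3) (b1 : B1.card = 3) (a2 : A2.card = 3) (b2 : B2.card = 3)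
    (a3 : A3.card = 3) (b3 : B3.card = 3)
    (s1 : A1 ∪ B1 ⊆ L) (s2 : A2 ∪ B2 ⊆ L)
    {x3 : ℕ} (hx3 : x3 ∈ (A3 ∪ B3) \ L) :
    Choice A1 B1 A2 B2 A3 B3 L 4 := by
  obtain ⟨hx3U, hx3L⟩ := Finset.mem_sdiff.mp hx3
  by_cases h12 : ((A1 ∪ B1) ∩ (A2 ∪ B2)).Nonempty
  · obtain ⟨x, hx⟩ := h12
    obtain ⟨hx1, hx2⟩ := Finset.mem_inter.mp hx
    obtain ⟨c1, d1, w1, v1, e1⟩ := pick_with (by omega) (by omega) hx1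
    obtain ⟨c2, d2, w2, v2, e2⟩ := pick_with (by omega) (by omega) hx2
    obtain ⟨c3, d3, w3, v3, e3⟩ := pick_with (by omega) (by omega) hx3U
    refine ⟨c1, d1, c2, d2, c3, d3, v1, v2, v3, ?_⟩
    refine le_trans (Finset.card_le_card ?_) (card4 x w1 w2 w3)
    intro a ha
    obtain ⟨haf, hal⟩ := Finset.mem_inter.mp ha
    have E1 : (a = c1 ∨ a = d1) ↔ (a = x ∨ a = w1) := by
      simpa using Finset.ext_iff.mp e1 a
    have E2 : (a = c2 ∨ a = d2) ↔ (a = x ∨ a = w2) := by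
      simpa using Finset.ext_iff.mp e2 a
    have E3 : (a = c3 ∨ a = d3) ↔ (a = x3 ∨ a = w3) := by
      simpa using Finset.ext_iff.mp e3 a
    have hne : a ≠ x3 := fun h => hx3L (h ▸ hal)
    simp only [Finset.mem_insert, Finset.mem_singleton] at haf ⊢
    rcases haf with h|h|h|h|h|h
    · rcases E1.mp (Or.inl h) with h|h <;> omega
    · rcases E1.mp (Or.inr h) with h|h <;> omega
    · rcases E2.mp (Or.inl h) with h|h <;> omega
    · rcases E2.mp (Or.inr h) with h|h <;> omega
    · rcases E3.mp (Or.inl h) with h|h <;> omega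
    · rcases E3.mp (Or.inr h) with h|h <;> omega
  · by_cases hw : (Opt A3 B3 x3 \ L).Nonempty
    · obtain ⟨w3, hw3⟩ := hw
      obtain ⟨hw3O, hw3L⟩ := Finset.mem_sdiff.mp hw3
      obtain ⟨c3, d3, v3, e3⟩ := pick_opt hw3O
      obtain ⟨c1, d1, v1⟩ := pick_basic (A := A1) (B := B1) (by omega) (by omega)
      obtain ⟨c2, d2, v2⟩ := pick_basic (A := A2) (B := B2) (by omega) (by omega)
      refine ⟨c1, d1, c2, d2, c3, d3, v1, v2, v3, ?_⟩
      refine le_trans (Finset.card_le_card ?_) (card4 c1 d1 c2 d2)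
      intro a ha
      obtain ⟨haf, hal⟩ := Finset.mem_inter.mp ha
      have E3 : (a = c3 ∨ a = d3) ↔ (a = x3 ∨ a = w3) := by
        simpa using Finset.ext_iff.mp e3 a
      have hne : a ≠ x3 := fun h => hx3L (h ▸ hal)
      have hne' : a ≠ w3 := fun h => hw3L (h ▸ hal)
      simp only [Finset.mem_insert, Finset.mem_singleton] at haf ⊢
      rcases haf with h|h|h|h|h|h
      · omega
      · omega
      · omega
      · omega
      · rcases E3.mp (Or.inl h) with h|h <;> omega
      · rcases E3.mp (Or.inr h) with h|h <;> omega
    · by_cases hz1 : (Opt A3 B3 x3 ∩ (A1 ∪ B1)).Nonempty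
      · obtain ⟨z, hz⟩ := hz1
        obtain ⟨hzO, hzU⟩ := Finset.mem_inter.mp hz
        obtain ⟨c3, d3, v3, e3⟩ := pick_opt hzO
        obtain ⟨c1, d1, w1, v1, e1⟩ := pick_with (by omega) (by omega) hzU
        obtain ⟨c2, d2, v2⟩ := pick_basic (A := A2) (B := B2) (by omega) (by omega)
        refine ⟨c1, d1, c2, d2, c3, d3, v1, v2, v3, ?_⟩
        refine le_trans (Finset.card_le_card ?_) (card4 z w1 c2 d2)
        intro a ha
        obtain ⟨haf, hal⟩ := Finset.mem_inter.mp ha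
        have E1 : (a = c1 ∨ a = d1) ↔ (a = z ∨ a = w1) := by
          simpa using Finset.ext_iff.mp e1 a
        have hne : a ≠ x3 := fun h => hx3L (h ▸ hal)
        have E3 : (a = c3 ∨ a = d3) ↔ (a = x3 ∨ a = z) := by
          simpa using Finset.ext_iff.mp e3 a
        simp only [Finset.mem_insert, Finset.mem_singleton] at haf ⊢
        rcases haf with h|h|h|h|h|h
        · rcases E1.mp (Or.inl h) with h|h <;> omega
        · rcases E1.mp (Or.inr h) with h|h <;> omega
        · omega
        · omega
        · rcases E3.mp (Or.inl h) with h|h <;> omega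
        · rcases E3.mp (Or.inr h) with h|h <;> omega
      · by_cases hz2 : (Opt A3 B3 x3 ∩ (A2 ∪ B2)).Nonempty
        · obtain ⟨z, hz⟩ := hz2
          obtain ⟨hzO, hzU⟩ := Finset.mem_inter.mp hz
          obtain ⟨c3, d3, v3, e3⟩ := pick_opt hzO
          obtain ⟨c2, d2, w2, v2, e2⟩ := pick_with (by omega) (by omega) hzU
          obtain ⟨c1, d1, v1⟩ := pick_basic (A := A1) (B := B1) (by omega) (by omega)
          refine ⟨c1, d1, c2, d2, c3, d3, v1, v2, v3, ?_⟩
          refine le_trans (Finset.card_le_card ?_) (card4 z w2 c1 d1)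
          intro a ha
          obtain ⟨haf, hal⟩ := Finset.mem_inter.mp ha
          have E2 : (a = c2 ∨ a = d2) ↔ (a = z ∨ a = w2) := by
            simpa using Finset.ext_iff.mp e2 a
          have hne : a ≠ x3 := fun h => hx3L (h ▸ hal)
          have E3 : (a = c3 ∨ a = d3) ↔ (a = x3 ∨ a = z) := by
            simpa using Finset.ext_iff.mp e3 a
          simp only [Finset.mem_insert, Finset.mem_singleton] at haf ⊢
          rcases haf with h|h|h|h|h|h
          · omega
          · omega
          · rcases E2.mp (Or.inl h) with h|h <;> omega
          · rcases E2.mp (Or.inr h) with h|h <;> omega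
          · rcases E3.mp (Or.inl h) with h|h <;> omega
          · rcases E3.mp (Or.inr h) with h|h <;> omega
        · exfalso
          have hO3L : Opt A3 B3 x3 ⊆ L := by
            rw [← Finset.sdiff_eq_empty_iff_subset]
            exact Finset.not_nonempty_iff_eq_empty.mp hw
          rw [Finset.not_nonempty_iff_eq_empty] at h12 hz1 hz2
          have hOsub : Opt A3 B3 x3 ⊆ L \ ((A1 ∪ B1) ∪ (A2 ∪ B2)) := by
            intro a ha
            refine Finset.mem_sdiff.mpr ⟨hO3L ha, fun hmem => ?_⟩
            rcases Finset.mem_union.mp hmem with h | h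
            · exact Finset.eq_empty_iff_forall_notMem.mp hz1 a
                (Finset.mem_inter.mpr ⟨ha, h⟩)
            · exact Finset.eq_empty_iff_forall_notMem.mp hz2 a
                (Finset.mem_inter.mpr ⟨ha, h⟩)
          have d12 : Disjoint (A1 ∪ B1) (A2 ∪ B2) :=
            Finset.disjoint_iff_inter_eq_empty.mpr h12
          have hcu : ((A1 ∪ B1) ∪ (A2 ∪ B2)).card = (A1 ∪ B1).card + (A2 ∪ B2).card :=
            Finset.card_union_of_disjoint d12
          have hc1 : 3 ≤ (A1 ∪ B1).card :=
            le_trans (by omega) (Finset.card_le_card Finset.subset_union_left)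
          have hc2 : 3 ≤ (A2 ∪ B2).card :=
            le_trans (by omega) (Finset.card_le_card Finset.subset_union_left)
          have hsd : (L \ ((A1 ∪ B1) ∪ (A2 ∪ B2))).card =
              L.card - ((A1 ∪ B1) ∪ (A2 ∪ B2)).card :=
            Finset.card_sdiff_of_subset (Finset.union_subset s1 s2)
          have hcle := Finset.card_le_card (Finset.union_subset s1 s2)
          have hO3c : 2 ≤ (Opt A3 B3 x3).card := opt_card (by omega) (by omega) hx3U
          have := Finset.card_le_card hOsub
          omega

/-- kernel, two displaced pairs. -/
lemma KC_core
    (a1 : A1.card = 3) (b1 : B1.card = 3) (a2 : A2.card = 3) (b2 : B2.card = 3)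
    (a3 : A3.card = 3) (b3 : B3.card = 3)
    {x1 x2 : ℕ} (hx1 : x1 ∈ (A1 ∪ B1) \ L) (hx2 : x2 ∈ (A2 ∪ B2) \ L) :
    Choice A1 B1 A2 B2 A3 B3 L 4 := by
  obtain ⟨hx1U, hx1L⟩ := Finset.mem_sdiff.mp hx1
  obtain ⟨hx2U, hx2L⟩ := Finset.mem_sdiff.mp hx2
  obtain ⟨c1, d1, w1, v1, e1⟩ := pick_with (by omega) (by omega) hx1U
  obtain ⟨c2, d2, w2, v2, e2⟩ := pick_with (by omega) (by omega) hx2U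
  obtain ⟨c3, d3, v3⟩ := pick_basic (A := A3) (B := B3) (by omega) (by omega)
  refine ⟨c1, d1, c2, d2, c3, d3, v1, v2, v3, ?_⟩
  refine le_trans (Finset.card_le_card ?_) (card4 w1 w2 c3 d3)
  intro a ha
  obtain ⟨haf, hal⟩ := Finset.mem_inter.mp ha
  have E1 : (a = c1 ∨ a = d1) ↔ (a = x1 ∨ a = w1) := by
    simpa using Finset.ext_iff.mp e1 a
  have E2 : (a = c2 ∨ a = d2) ↔ (a = x2 ∨ a = w2) := by
    simpa using Finset.ext_iff.mp e2 a
  have hne1 : a ≠ x1 := fun h => hx1L (h ▸ hal)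
  have hne2 : a ≠ x2 := fun h => hx2L (h ▸ hal)
  simp only [Finset.mem_insert, Finset.mem_singleton] at haf ⊢
  rcases haf with h|h|h|h|h|h
  · rcases E1.mp (Or.inl h) with h|h <;> omega
  · rcases E1.mp (Or.inr h) with h|h <;> omega
  · rcases E2.mp (Or.inl h) with h|h <;> omega
  · rcases E2.mp (Or.inr h) with h|h <;> omega
  · omega
  · omega
end

section
variable {A1 B1 A2 B2 A3 B3 L P : Finset ℕ}

lemma KA (hL : L.card = 7)
    (a1 : A1.card = 3) (b1 : B1.card = 3) (a2 : A2.card = 3) (b2 : B2.card = 3)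
    (a3 : A3.card = 3) (b3 : B3.card = 3)
    (s1 : A1 ∪ B1 ⊆ L) (s2 : A2 ∪ B2 ⊆ L) (s3 : A3 ∪ B3 ⊆ L) :
    Choice A1 B1 A2 B2 A3 B3 L 4 := by
  have hc1 : 3 ≤ (A1 ∪ B1).card :=
    le_trans (by omega) (Finset.card_le_card Finset.subset_union_left)
  have hc2 : 3 ≤ (A2 ∪ B2).card :=
    le_trans (by omega) (Finset.card_le_card Finset.subset_union_left)
  have hc3 : 3 ≤ (A3 ∪ B3).card :=
    le_trans (by omega) (Finset.card_le_card Finset.subset_union_left)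
  rcases find_inter s1 s2 s3 hc1 hc2 hc3 (by omega) with h | h | h
  · obtain ⟨x, hx⟩ := h
    obtain ⟨hx1, hx2⟩ := Finset.mem_inter.mp hx
    exact KA_core hL a1 b1 a2 b2 a3 b3 s1 s2 s3 hx1 hx2
  · obtain ⟨x, hx⟩ := h
    obtain ⟨hx1, hx3⟩ := Finset.mem_inter.mp hx
    exact choice_swap23 (KA_core hL a1 b1 a3 b3 a2 b2 s1 s3 s2 hx1 hx3)
  · obtain ⟨x, hx⟩ := h
    obtain ⟨hx2, hx3⟩ := Finset.mem_inter.mp hx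
    exact choice_swap13 (choice_swap12 (KA_core hL a2 b2 a3 b3 a1 b1 s2 s3 s1 hx2 hx3))

/-- key kernel lemma: when all three triangle lists are a single 7-set `L`,
pair colors can be chosen meeting `L` in at most 4 colors. -/
lemma Kfull (hL : L.card = 7)
    (a1 : A1.card = 3) (b1 : B1.card = 3) (a2 : A2.card = 3) (b2 : B2.card = 3)
    (a3 : A3.card = 3) (b3 : B3.card = 3) :
    Choice A1 B1 A2 B2 A3 B3 L 4 := by
  by_cases t1 : A1 ∪ B1 ⊆ L
  · by_cases t2 : A2 ∪ B2 ⊆ L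
    · by_cases t3 : A3 ∪ B3 ⊆ L
      · exact KA hL a1 b1 a2 b2 a3 b3 t1 t2 t3
      · obtain ⟨x, hxU, hxL⟩ := Finset.not_subset.mp t3
        exact KB_core hL a1 b1 a2 b2 a3 b3 t1 t2 (Finset.mem_sdiff.mpr ⟨hxU, hxL⟩)
    · by_cases t3 : A3 ∪ B3 ⊆ L
      · obtain ⟨x, hxU, hxL⟩ := Finset.not_subset.mp t2
        exact choice_swap23
          (KB_core hL a1 b1 a3 b3 a2 b2 t1 t3 (Finset.mem_sdiff.mpr ⟨hxU, hxL⟩))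
      · obtain ⟨x, hxU, hxL⟩ := Finset.not_subset.mp t2
        obtain ⟨y, hyU, hyL⟩ := Finset.not_subset.mp t3
        exact choice_swap13 (choice_swap12 (KC_core a2 b2 a3 b3 a1 b1
          (Finset.mem_sdiff.mpr ⟨hxU, hxL⟩) (Finset.mem_sdiff.mpr ⟨hyU, hyL⟩)))
  · by_cases t2 : A2 ∪ B2 ⊆ L
    · by_cases t3 : A3 ∪ B3 ⊆ L
      · obtain ⟨x, hxU, hxL⟩ := Finset.not_subset.mp t1
        exact choice_swap13 (choice_swap12
          (KB_core hL a2 b2 a3 b3 a1 b1 t2 t3 (Finset.mem_sdiff.mpr ⟨hxU, hxL⟩)))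
      · obtain ⟨x, hxU, hxL⟩ := Finset.not_subset.mp t1
        obtain ⟨y, hyU, hyL⟩ := Finset.not_subset.mp t3
        exact KC_core a1 b1 a3 b3 a2 b2
          (Finset.mem_sdiff.mpr ⟨hxU, hxL⟩) (Finset.mem_sdiff.mpr ⟨hyU, hyL⟩)
          |> choice_swap23
    · obtain ⟨x, hxU, hxL⟩ := Finset.not_subset.mp t1
      obtain ⟨y, hyU, hyL⟩ := Finset.not_subset.mp t2
      exact KC_core a1 b1 a2 b2 a3 b3
        (Finset.mem_sdiff.mpr ⟨hxU, hxL⟩) (Finset.mem_sdiff.mpr ⟨hyU, hyL⟩)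

lemma L1_coreA
    (a1 : A1.card = 3) (b1 : B1.card = 3) (a2 : A2.card = 3) (b2 : B2.card = 3)
    (a3 : A3.card = 3) (b3 : B3.card = 3)
    {x : ℕ} (hx : x ∈ (A3 ∪ B3) \ P) :
    Choice A1 B1 A2 B2 A3 B3 P 5 := by
  obtain ⟨hxU, hxP⟩ := Finset.mem_sdiff.mp hx
  obtain ⟨c3, d3, w3, v3, e3⟩ := pick_with (by omega) (by omega) hxU
  obtain ⟨c1, d1, v1⟩ := pick_basic (A := A1) (B := B1) (by omega) (by omega)
  obtain ⟨c2, d2, v2⟩ := pick_basic (A := A2) (B := B2) (by omega) (by omega)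
  refine ⟨c1, d1, c2, d2, c3, d3, v1, v2, v3, ?_⟩
  refine le_trans (Finset.card_le_card ?_) (card5 c1 d1 c2 d2 w3)
  intro a ha
  obtain ⟨haf, hal⟩ := Finset.mem_inter.mp ha
  have E3 : (a = c3 ∨ a = d3) ↔ (a = x ∨ a = w3) := by
    simpa using Finset.ext_iff.mp e3 a
  have hne : a ≠ x := fun h => hxP (h ▸ hal)
  simp only [Finset.mem_insert, Finset.mem_singleton] at haf ⊢
  rcases haf with h|h|h|h|h|h
  · omega
  · omega
  · omega
  · omega
  · rcases E3.mp (Or.inl h) with h|h <;> omega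
  · rcases E3.mp (Or.inr h) with h|h <;> omega

lemma L1_coreB
    (a1 : A1.card = 3) (b1 : B1.card = 3) (a2 : A2.card = 3) (b2 : B2.card = 3)
    (a3 : A3.card = 3) (b3 : B3.card = 3)
    {x : ℕ} (hx1 : x ∈ A1 ∪ B1) (hx2 : x ∈ A2 ∪ B2) :
    Choice A1 B1 A2 B2 A3 B3 P 5 := by
  obtain ⟨c1, d1, w1, v1, e1⟩ := pick_with (by omega) (by omega) hx1
  obtain ⟨c2, d2, w2, v2, e2⟩ := pick_with (by omega) (by omega) hx2
  obtain ⟨c3, d3, v3⟩ := pick_basic (A := A3) (B := B3) (by omega) (by omega)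
  refine ⟨c1, d1, c2, d2, c3, d3, v1, v2, v3, ?_⟩
  refine le_trans (Finset.card_le_card ?_) (card5 x w1 w2 c3 d3)
  intro a ha
  obtain ⟨haf, _⟩ := Finset.mem_inter.mp ha
  have E1 : (a = c1 ∨ a = d1) ↔ (a = x ∨ a = w1) := by
    simpa using Finset.ext_iff.mp e1 a
  have E2 : (a = c2 ∨ a = d2) ↔ (a = x ∨ a = w2) := by
    simpa using Finset.ext_iff.mp e2 a
  simp only [Finset.mem_insert, Finset.mem_singleton] at haf ⊢
  rcases haf with h|h|h|h|h|h
  · rcases E1.mp (Or.inl h) with h|h <;> omega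
  · rcases E1.mp (Or.inr h) with h|h <;> omega
  · rcases E2.mp (Or.inl h) with h|h <;> omega
  · rcases E2.mp (Or.inr h) with h|h <;> omega
  · omega
  · omega

/-- the easier selection lemma: for any pot `P` of size at most 8, pair colors
can be chosen meeting `P` in at most 5 colors. -/
lemma L1full (hP : P.card ≤ 8)
    (a1 : A1.card = 3) (b1 : B1.card = 3) (a2 : A2.card = 3) (b2 : B2.card = 3)
    (a3 : A3.card = 3) (b3 : B3.card = 3) :
    Choice A1 B1 A2 B2 A3 B3 P 5 := by
  by_cases t1 : A1 ∪ B1 ⊆ P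
  · by_cases t2 : A2 ∪ B2 ⊆ P
    · by_cases t3 : A3 ∪ B3 ⊆ P
      · have hc1 : 3 ≤ (A1 ∪ B1).card :=
          le_trans (by omega) (Finset.card_le_card Finset.subset_union_left)
        have hc2 : 3 ≤ (A2 ∪ B2).card :=
          le_trans (by omega) (Finset.card_le_card Finset.subset_union_left)
        have hc3 : 3 ≤ (A3 ∪ B3).card :=
          le_trans (by omega) (Finset.card_le_card Finset.subset_union_left)
        rcases find_inter t1 t2 t3 hc1 hc2 hc3 hP with h | h | h
        · obtain ⟨x, hx⟩ := h
          obtain ⟨hx1, hx2⟩ := Finset.mem_inter.mp hx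
          exact L1_coreB a1 b1 a2 b2 a3 b3 hx1 hx2
        · obtain ⟨x, hx⟩ := h
          obtain ⟨hx1, hx3⟩ := Finset.mem_inter.mp hx
          exact choice_swap23 (L1_coreB a1 b1 a3 b3 a2 b2 hx1 hx3)
        · obtain ⟨x, hx⟩ := h
          obtain ⟨hx2, hx3⟩ := Finset.mem_inter.mp hx
          exact choice_swap13 (choice_swap12 (L1_coreB a2 b2 a3 b3 a1 b1 hx2 hx3))
      · obtain ⟨x, hxU, hxP⟩ := Finset.not_subset.mp t3
        exact L1_coreA a1 b1 a2 b2 a3 b3 (Finset.mem_sdiff.mpr ⟨hxU, hxP⟩)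
    · obtain ⟨x, hxU, hxP⟩ := Finset.not_subset.mp t2
      exact choice_swap23 (L1_coreA a1 b1 a3 b3 a2 b2 (Finset.mem_sdiff.mpr ⟨hxU, hxP⟩))
  · obtain ⟨x, hxU, hxP⟩ := Finset.not_subset.mp t1
    exact choice_swap13 (choice_swap12
      (L1_coreA a2 b2 a3 b3 a1 b1 (Finset.mem_sdiff.mpr ⟨hxU, hxP⟩)))
end

lemma sdr3 {A B C : Finset ℕ} (h1 : 1 ≤ A.card) (h2 : 1 ≤ B.card) (h3 : 1 ≤ C.card)
    (h12 : 2 ≤ (A ∪ B).card) (h13 : 2 ≤ (A ∪ C).card) (h23 : 2 ≤ (B ∪ C).card)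
    (h123 : 3 ≤ (A ∪ B ∪ C).card) :
    ∃ x ∈ A, ∃ y ∈ B, ∃ z ∈ C, x ≠ y ∧ x ≠ z ∧ y ≠ z := by
  have hall : ∀ s : Finset (Fin 3), s.card ≤ (s.biUnion ![A, B, C]).card := by
    intro s
    by_cases m0 : (0 : Fin 3) ∈ s <;> by_cases m1 : (1 : Fin 3) ∈ s <;>
      by_cases m2 : (2 : Fin 3) ∈ s
    · have hs : s = {0, 1, 2} := by ext a; fin_cases a <;> simp [m0, m1, m2]
      rw [hs]
      have hb : ({0, 1, 2} : Finset (Fin 3)).biUnion ![A, B, C] = A ∪ B ∪ C := by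
        simp [Finset.union_assoc]
      rw [hb, show ({0, 1, 2} : Finset (Fin 3)).card = 3 by decide]
      exact h123
    · have hs : s = {0, 1} := by ext a; fin_cases a <;> simp [m0, m1, m2]
      rw [hs]
      have hb : ({0, 1} : Finset (Fin 3)).biUnion ![A, B, C] = A ∪ B := by simp
      rw [hb, show ({0, 1} : Finset (Fin 3)).card = 2 by decide]
      exact h12
    · have hs : s = {0, 2} := by ext a; fin_cases a <;> simp [m0, m1, m2]
      rw [hs]
      have hb : ({0, 2} : Finset (Fin 3)).biUnion ![A, B, C] = A ∪ C := by simp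
      rw [hb, show ({0, 2} : Finset (Fin 3)).card = 2 by decide]
      exact h13
    · have hs : s = {0} := by ext a; fin_cases a <;> simp [m0, m1, m2]
      rw [hs]
      have hb : ({0} : Finset (Fin 3)).biUnion ![A, B, C] = A := by simp
      rw [hb, show ({0} : Finset (Fin 3)).card = 1 by decide]
      exact h1
    · have hs : s = {1, 2} := by ext a; fin_cases a <;> simp [m0, m1, m2]
      rw [hs]
      have hb : ({1, 2} : Finset (Fin 3)).biUnion ![A, B, C] = B ∪ C := by simp
      rw [hb, show ({1, 2} : Finset (Fin 3)).card = 2 by decide]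
      exact h23
    · have hs : s = {1} := by ext a; fin_cases a <;> simp [m0, m1, m2]
      rw [hs]
      have hb : ({1} : Finset (Fin 3)).biUnion ![A, B, C] = B := by simp
      rw [hb, show ({1} : Finset (Fin 3)).card = 1 by decide]
      exact h2
    · have hs : s = {2} := by ext a; fin_cases a <;> simp [m0, m1, m2]
      rw [hs]
      have hb : ({2} : Finset (Fin 3)).biUnion ![A, B, C] = C := by simp
      rw [hb, show ({2} : Finset (Fin 3)).card = 1 by decide]
      exact h3
    · have hs : s = ∅ := by ext a; fin_cases a <;> simp [m0, m1, m2]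
      rw [hs]; simp
  obtain ⟨f, hinj, hmem⟩ :=
    (Finset.all_card_le_biUnion_card_iff_exists_injective ![A, B, C]).mp hall
  refine ⟨f 0, by simpa using hmem 0, f 1, by simpa using hmem 1, f 2,
    by simpa using hmem 2, ?_, ?_, ?_⟩ <;>
    · intro h
      have := hinj h
      simp_all

lemma sdiff_lb (S F : Finset ℕ) : S.card ≤ (S \ F).card + F.card := by
  have h1 : S ⊆ (S \ F) ∪ F := by
    rw [Finset.sdiff_union_self_eq_union]; exact Finset.subset_union_left
  exact le_trans (Finset.card_le_card h1) (Finset.card_union_le _ _)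

lemma union_ge8 {S T : Finset ℕ} (hS : S.card = 7) (hT : T.card = 7) (hne : S ≠ T) :
    8 ≤ (S ∪ T).card := by
  by_contra h
  push_neg at h
  have h1 : S = S ∪ T :=
    Finset.eq_of_subset_of_card_le Finset.subset_union_left (by omega)
  have h2 : T ⊆ S := by rw [h1]; exact Finset.subset_union_right
  exact hne (Finset.eq_of_subset_of_card_le h2 (by omega)).symm

lemma MAIN {X Y Z A1 B1 A2 B2 A3 B3 : Finset ℕ}
    (hX : X.card = 7) (hY : Y.card = 7) (hZ : Z.card = 7)
    (a1 : A1.card = 3) (b1 : B1.card = 3) (a2 : A2.card = 3) (b2 : B2.card = 3)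
    (a3 : A3.card = 3) (b3 : B3.card = 3) :
    ∃ x y z c1 d1 c2 d2 c3 d3,
      x ∈ X ∧ y ∈ Y ∧ z ∈ Z ∧ x ≠ y ∧ x ≠ z ∧ y ≠ z ∧
      PairValid A1 B1 c1 d1 ∧ PairValid A2 B2 c2 d2 ∧ PairValid A3 B3 c3 d3 ∧
      ∀ w ∈ ({c1,d1,c2,d2,c3,d3} : Finset ℕ), w ≠ x ∧ w ≠ y ∧ w ≠ z := by
  by_cases hall : X = Y ∧ X = Z
  · obtain ⟨hxy, hxz⟩ := hall
    subst hxy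
    subst hxz
    obtain ⟨c1, d1, c2, d2, c3, d3, v1, v2, v3, hF⟩ := Kfull hX a1 b1 a2 b2 a3 b3
    set F := ({c1,d1,c2,d2,c3,d3} : Finset ℕ) with hFdef
    have hkey : 3 ≤ (X \ F).card := by
      have h := Finset.card_sdiff_add_card_inter X F
      have h2 : (X ∩ F).card ≤ 4 := by rw [Finset.inter_comm]; exact hF
      omega
    obtain ⟨x, hx, y, hy, z, hz, hne1, hne2, hne3⟩ :=
      sdr3 (A := X \ F) (B := X \ F) (C := X \ F) (by omega) (by omega) (by omega)
        (by rw [Finset.union_self]; omega) (by rw [Finset.union_self]; omega)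
        (by rw [Finset.union_self]; omega)
        (by rw [Finset.union_self, Finset.union_self]; omega)
    refine ⟨x, y, z, c1, d1, c2, d2, c3, d3, (Finset.mem_sdiff.mp hx).1,
      (Finset.mem_sdiff.mp hy).1, (Finset.mem_sdiff.mp hz).1, hne1, hne2, hne3,
      v1, v2, v3, fun w hw => ?_⟩
    exact ⟨fun h => (Finset.mem_sdiff.mp hx).2 (h ▸ hw),
      fun h => (Finset.mem_sdiff.mp hy).2 (h ▸ hw),
      fun h => (Finset.mem_sdiff.mp hz).2 (h ▸ hw)⟩
  · have hV8 : 8 ≤ (X ∪ Y ∪ Z).card := by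
      by_cases hxy : X = Y
      · have hxz : X ≠ Z := fun h => hall ⟨hxy, h⟩
        refine le_trans (union_ge8 hX hZ hxz) (Finset.card_le_card ?_)
        exact Finset.union_subset_union Finset.subset_union_left (Finset.Subset.refl Z)
      · exact le_trans (union_ge8 hX hY hxy) (Finset.card_le_card Finset.subset_union_left)
    obtain ⟨P, hch, hPxy, hPxz, hPyz, hPV⟩ : ∃ P : Finset ℕ,
        Choice A1 B1 A2 B2 A3 B3 P 5 ∧ (X = Y → X ⊆ P) ∧ (X = Z → X ⊆ P) ∧
        (Y = Z → Y ⊆ P) ∧ ((X ∪ Y ∪ Z).card ≤ 8 → X ∪ Y ∪ Z ⊆ P) := by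
      by_cases hv : (X ∪ Y ∪ Z).card ≤ 8
      · exact ⟨X ∪ Y ∪ Z, L1full hv a1 b1 a2 b2 a3 b3,
          fun _ => Finset.subset_union_left.trans Finset.subset_union_left,
          fun _ => Finset.subset_union_left.trans Finset.subset_union_left,
          fun _ => Finset.subset_union_right.trans Finset.subset_union_left,
          fun _ => Finset.Subset.refl _⟩
      · by_cases hxy : X = Y
        · exact ⟨X, L1full (by omega) a1 b1 a2 b2 a3 b3, fun _ => Finset.Subset.refl _,
            fun _ => Finset.Subset.refl _,
            fun hyz => le_of_eq (hxy.symm), fun h => absurd h hv⟩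
        · by_cases hxz : X = Z
          · exact ⟨X, L1full (by omega) a1 b1 a2 b2 a3 b3, fun h => absurd h hxy,
              fun _ => Finset.Subset.refl _,
              fun hyz => le_of_eq (hyz.trans hxz.symm), fun h => absurd h hv⟩
          · by_cases hyz : Y = Z
            · exact ⟨Y, L1full (by omega) a1 b1 a2 b2 a3 b3, fun h => absurd h hxy,
                fun h => absurd h hxz, fun _ => Finset.Subset.refl _, fun h => absurd h hv⟩
            · exact ⟨X, L1full (by omega) a1 b1 a2 b2 a3 b3, fun h => absurd h hxy,
                fun h => absurd h hxz, fun h => absurd h hyz, fun h => absurd h hv⟩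
    obtain ⟨c1, d1, c2, d2, c3, d3, v1, v2, v3, hF⟩ := hch
    set F := ({c1,d1,c2,d2,c3,d3} : Finset ℕ) with hFdef
    have hF6 : F.card ≤ 6 := card6 c1 d1 c2 d2 c3 d3
    have hFP : (P ∩ F).card ≤ 5 := by rw [Finset.inter_comm]; exact hF
    have cx : 1 ≤ (X \ F).card := by have := sdiff_lb X F; omega
    have cy : 1 ≤ (Y \ F).card := by have := sdiff_lb Y F; omega
    have cz : 1 ≤ (Z \ F).card := by have := sdiff_lb Z F; omega
    have c12 : 2 ≤ ((X ∪ Y) \ F).card := by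
      by_cases hxy : X = Y
      · have hu : X ∪ Y = X := by rw [← hxy, Finset.union_self]
        rw [hu]
        have h := Finset.card_sdiff_add_card_inter X F
        have h2 := Finset.card_le_card
          (Finset.inter_subset_inter (hPxy hxy) (Finset.Subset.refl F))
        omega
      · have h1 := union_ge8 hX hY hxy
        have h2 := sdiff_lb (X ∪ Y) F
        omega
    have c13 : 2 ≤ ((X ∪ Z) \ F).card := by
      by_cases hxz : X = Z
      · have hu : X ∪ Z = X := by rw [← hxz, Finset.union_self]
        rw [hu]
        have h := Finset.card_sdiff_add_card_inter X F
        have h2 := Finset.card_le_card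
          (Finset.inter_subset_inter (hPxz hxz) (Finset.Subset.refl F))
        omega
      · have h1 := union_ge8 hX hZ hxz
        have h2 := sdiff_lb (X ∪ Z) F
        omega
    have c23 : 2 ≤ ((Y ∪ Z) \ F).card := by
      by_cases hyz : Y = Z
      · have hu : Y ∪ Z = Y := by rw [← hyz, Finset.union_self]
        rw [hu]
        have h := Finset.card_sdiff_add_card_inter Y F
        have h2 := Finset.card_le_card
          (Finset.inter_subset_inter (hPyz hyz) (Finset.Subset.refl F))
        omega
      · have h1 := union_ge8 hY hZ hyz
        have h2 := sdiff_lb (Y ∪ Z) F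
        omega
    have c123 : 3 ≤ ((X ∪ Y ∪ Z) \ F).card := by
      by_cases hv : (X ∪ Y ∪ Z).card ≤ 8
      · have h := Finset.card_sdiff_add_card_inter (X ∪ Y ∪ Z) F
        have h2 := Finset.card_le_card
          (Finset.inter_subset_inter (hPV hv) (Finset.Subset.refl F))
        omega
      · have h2 := sdiff_lb (X ∪ Y ∪ Z) F
        omega
    have e12 : (X \ F) ∪ (Y \ F) = (X ∪ Y) \ F := (Finset.union_sdiff_distrib X Y F).symm
    have e13 : (X \ F) ∪ (Z \ F) = (X ∪ Z) \ F := (Finset.union_sdiff_distrib X Z F).symm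
    have e23 : (Y \ F) ∪ (Z \ F) = (Y ∪ Z) \ F := (Finset.union_sdiff_distrib Y Z F).symm
    have e123 : (X \ F) ∪ (Y \ F) ∪ (Z \ F) = (X ∪ Y ∪ Z) \ F := by
      rw [e12, ← Finset.union_sdiff_distrib]
    obtain ⟨x, hx, y, hy, z, hz, hne1, hne2, hne3⟩ :=
      sdr3 cx cy cz (by rw [e12]; exact c12) (by rw [e13]; exact c13)
        (by rw [e23]; exact c23) (by rw [e123]; exact c123)
    refine ⟨x, y, z, c1, d1, c2, d2, c3, d3, (Finset.mem_sdiff.mp hx).1,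
      (Finset.mem_sdiff.mp hy).1, (Finset.mem_sdiff.mp hz).1, hne1, hne2, hne3,
      v1, v2, v3, fun w hw => ?_⟩
    exact ⟨fun h => (Finset.mem_sdiff.mp hx).2 (h ▸ hw),
      fun h => (Finset.mem_sdiff.mp hy).2 (h ▸ hw),
      fun h => (Finset.mem_sdiff.mp hz).2 (h ▸ hw)⟩

end Aux

/-- A graph `H` is `d₁`-choosable: for every list assignment giving each vertex `v`
a list of `d_H(v) - 1` colors, there is a proper coloring from the lists. -/
def D1Choosable {W : Type*} (H : SimpleGraph W) : Prop :=
  ∀ L : W → Finset ℕ, (∀ v, (L v).card = (H.neighborSet v).ncard - 1) →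
    ∃ φ : W → ℕ, (∀ v, φ v ∈ L v) ∧ ∀ u v, H.Adj u v → φ u ≠ φ v

/-- The graph `K₃ ∨ 3K₂`: a triangle joined to three disjoint edges.
Vertex `(i, a)` on the right lies in the `i`-th edge. -/
def K3Join3K2 : SimpleGraph (Fin 3 ⊕ Fin 3 × Fin 2) where
  Adj x y :=
    match x, y with
    | .inl a, .inl b => a ≠ b
    | .inl _, .inr _ => True
    | .inr _, .inl _ => True
    | .inr a, .inr b => a.1 = b.1 ∧ a.2 ≠ b.2
  symm := by
    constructor
    rintro (a | a) (b | b) h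
    · exact Ne.symm h
    · trivial
    · trivial
    · exact ⟨h.1.symm, h.2.symm⟩
  loopless := by
    constructor
    rintro (a | a) h
    · exact h rfl
    · exact h.2 rfl

instance : DecidableRel K3Join3K2.Adj := fun x y =>
  match x, y with
  | .inl a, .inl b => inferInstanceAs (Decidable (a ≠ b))
  | .inl _, .inr _ => inferInstanceAs (Decidable True)
  | .inr _, .inl _ => inferInstanceAs (Decidable True)
  | .inr a, .inr b => inferInstanceAs (Decidable (a.1 = b.1 ∧ a.2 ≠ b.2))

example : (K3Join3K2.neighborFinset (Sum.inl 0)).card = 8 := by decide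
example : ∀ v : Fin 3 ⊕ Fin 3 × Fin 2, (K3Join3K2.neighborSet v).ncard =
    Sum.elim (fun _ => 8) (fun _ => 4) v := by
  intro v
  rw [SimpleGraph.neighborSet, Set.ncard_eq_toFinset_card']
  revert v; decide

theorem stmt11 : D1Choosable K3Join3K2 := by
  intro L hL
  have hn : ∀ v : Fin 3 ⊕ Fin 3 × Fin 2, (K3Join3K2.neighborSet v).ncard =
      Sum.elim (fun _ => 8) (fun _ => 4) v := by
    intro v
    rw [SimpleGraph.neighborSet, Set.ncard_eq_toFinset_card']
    revert v; decide
  have hc : ∀ a : Fin 3, (L (.inl a)).card = 7 := by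
    intro a; rw [hL, hn]; rfl
  have hc' : ∀ p : Fin 3 × Fin 2, (L (.inr p)).card = 3 := by
    intro p; rw [hL, hn]; rfl
  obtain ⟨x, y, z, c1, d1, c2, d2, c3, d3, hxX, hyY, hzZ, hxy, hxz, hyz,
      v1, v2, v3, hsep⟩ :=
    MAIN (hc 0) (hc 1) (hc 2) (hc' (0,0)) (hc' (0,1)) (hc' (1,0)) (hc' (1,1))
      (hc' (2,0)) (hc' (2,1))
  have m1 : c1 ∈ ({c1,d1,c2,d2,c3,d3} : Finset ℕ) := by simp
  have m2 : d1 ∈ ({c1,d1,c2,d2,c3,d3} : Finset ℕ) := by simp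
  have m3 : c2 ∈ ({c1,d1,c2,d2,c3,d3} : Finset ℕ) := by simp
  have m4 : d2 ∈ ({c1,d1,c2,d2,c3,d3} : Finset ℕ) := by simp
  have m5 : c3 ∈ ({c1,d1,c2,d2,c3,d3} : Finset ℕ) := by simp
  have m6 : d3 ∈ ({c1,d1,c2,d2,c3,d3} : Finset ℕ) := by simp
  obtain ⟨s1x, s1y, s1z⟩ := hsep c1 m1
  obtain ⟨s2x, s2y, s2z⟩ := hsep d1 m2
  obtain ⟨s3x, s3y, s3z⟩ := hsep c2 m3
  obtain ⟨s4x, s4y, s4z⟩ := hsep d2 m4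
  obtain ⟨s5x, s5y, s5z⟩ := hsep c3 m5
  obtain ⟨s6x, s6y, s6z⟩ := hsep d3 m6
  obtain ⟨hc1A, hd1B, hcd1⟩ := v1
  obtain ⟨hc2A, hd2B, hcd2⟩ := v2
  obtain ⟨hc3A, hd3B, hcd3⟩ := v3
  refine ⟨fun v => Sum.elim ![x, y, z]
    (fun p => ![![c1, d1], ![c2, d2], ![c3, d3]] p.1 p.2) v, ?_, ?_⟩
  · rintro (a | ⟨i, j⟩)
    · fin_cases a
      · exact hxX
      · exact hyY
      · exact hzZ
    · fin_cases i <;> fin_cases j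
      · exact hc1A
      · exact hd1B
      · exact hc2A
      · exact hd2B
      · exact hc3A
      · exact hd3B
  · rintro (a | ⟨i, j⟩) (b | ⟨k, l⟩) huv
    · fin_cases a <;> fin_cases b <;>
        first
          | exact absurd huv (by decide)
          | exact hxy | exact hxz | exact hyz
          | exact hxy.symm | exact hxz.symm | exact hyz.symm
    · fin_cases a <;> fin_cases k <;> fin_cases l <;>
        first
          | exact s1x.symm | exact s2x.symm | exact s3x.symm
          | exact s4x.symm | exact s5x.symm | exact s6x.symm
          | exact s1y.symm | exact s2y.symm | exact s3y.symm
          | exact s4y.symm | exact s5y.symm | exact s6y.symm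
          | exact s1z.symm | exact s2z.symm | exact s3z.symm
          | exact s4z.symm | exact s5z.symm | exact s6z.symm
    · fin_cases i <;> fin_cases j <;> fin_cases b <;>
        first
          | exact s1x | exact s2x | exact s3x | exact s4x | exact s5x | exact s6x
          | exact s1y | exact s2y | exact s3y | exact s4y | exact s5y | exact s6y
          | exact s1z | exact s2z | exact s3z | exact s4z | exact s5z | exact s6z
    · fin_cases i <;> fin_cases j <;> fin_cases k <;> fin_cases l <;>
        first
          | exact absurd huv (by decide)
          | exact hcd1 | exact hcd1.symm
          | exact hcd2 | exact hcd2.symm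
          | exact hcd3 | exact hcd3.symm
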